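/- Laufer-type algorithm: start with x_0 = x ∈ L; while x_l ∉ S_{[k]}, pick j with (x_l + l'_{[k]}, b_j) > 0 and set x_{l+1} = x_l + b_j. Then the algorithm terminates, its endpoint is the unique minimal y ≥ x in S_{[k]}, and χ_k(x_{l+1}) ≤ χ_k(x_l) at every step (where k = K + 2l'_{[k]}). -/

import Mathlib

/-- `χ_k(x)` for the distinguished characteristic element `k = K + 2 l'_{[k]}`,
where `K(b_j) = -(b_j,b_j) - 2` and `(l'_{[k]})(x) = (l'_{[k]}, x)`. -/
noncomputable def chiDist {J : Type*} [Fintype J] (B : J → J → ℚ) (l'k : J → ℚ)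
    (x : J → ℤ) : ℚ :=
  (-(∑ j, (x j : ℚ) * ((-(B j j) - 2) + 2 * ∑ i, l'k i * B i j))
      - ∑ i, ∑ j, (x i : ℚ) * B i j * (x j : ℚ)) / 2

open Matrix

lemma chi_step' {J : Type*} [Fintype J] [DecidableEq J] (B : J → J → ℚ)
    (hsym : ∀ i j, B i j = B j i) (l'k : J → ℚ) (x y : J → ℤ) (j : J)
    (hy : ∀ i, (y i : ℚ) = (x i : ℚ) + (if i = j then 1 else 0)) :
    chiDist B l'k y = chiDist B l'k x + (1 - ∑ i, ((x i : ℚ) + l'k i) * B i j) := by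
  have key : ∀ (f : J → ℚ),
      (∑ i, (y i : ℚ) * f i) = (∑ i, (x i : ℚ) * f i) + f j := by
    intro f
    simp only [hy, add_mul, Finset.sum_add_distrib, ite_mul, one_mul, zero_mul,
      Finset.sum_ite_eq', Finset.mem_univ, if_true]
  have key2 : ∀ (f : J → ℚ),
      (∑ i, f i * (y i : ℚ)) = (∑ i, f i * (x i : ℚ)) + f j := by
    intro f
    simp only [hy, mul_add, Finset.sum_add_distrib, mul_ite, mul_one, mul_zero,
      Finset.sum_ite_eq', Finset.mem_univ, if_true]
  have hQ : (∑ i, ∑ jj, (y i : ℚ) * B i jj * (y jj : ℚ))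
      = (∑ i, ∑ jj, (x i : ℚ) * B i jj * (x jj : ℚ))
        + (∑ i, (x i : ℚ) * B i j) + (∑ jj, B j jj * (x jj : ℚ)) + B j j := by
    have inner : ∀ i, (∑ jj, (y i : ℚ) * B i jj * (y jj : ℚ))
        = (y i : ℚ) * ((∑ jj, B i jj * (x jj : ℚ)) + B i j) := by
      intro i
      rw [mul_add, Finset.mul_sum]
      rw [key2 (fun jj => (y i : ℚ) * B i jj)]
      congr 1
      refine Finset.sum_congr rfl fun jj _ => by ring
    calc (∑ i, ∑ jj, (y i : ℚ) * B i jj * (y jj : ℚ))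
        = ∑ i, (y i : ℚ) * ((∑ jj, B i jj * (x jj : ℚ)) + B i j) :=
          Finset.sum_congr rfl fun i _ => inner i
      _ = (∑ i, (x i : ℚ) * ((∑ jj, B i jj * (x jj : ℚ)) + B i j))
            + ((∑ jj, B j jj * (x jj : ℚ)) + B j j) := key _
      _ = _ := by
          simp only [mul_add, Finset.sum_add_distrib]
          have h2 : ∀ i, (x i : ℚ) * (∑ jj, B i jj * (x jj : ℚ))
              = ∑ jj, (x i : ℚ) * B i jj * (x jj : ℚ) := by
            intro i; rw [Finset.mul_sum]; exact Finset.sum_congr rfl fun jj _ => by ring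
          simp only [h2]; ring
  have hL := key (fun jj => (-(B jj jj) - 2) + 2 * ∑ i, l'k i * B i jj)
  simp only [chiDist, hL, hQ]
  have hswap : (∑ jj, B j jj * (x jj : ℚ)) = ∑ i, (x i : ℚ) * B i j := by
    refine Finset.sum_congr rfl fun i _ => by rw [hsym j i]; ring
  rw [hswap]
  have hsplit : (∑ i, ((x i : ℚ) + l'k i) * B i j)
      = (∑ i, (x i : ℚ) * B i j) + (∑ i, l'k i * B i j) := by
    simp only [add_mul, Finset.sum_add_distrib]
  rw [hsplit]
  ring

lemma chi_step {J : Type*} [Fintype J] [DecidableEq J] (B : J → J → ℚ)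
    (hsym : ∀ i j, B i j = B j i) (l'k : J → ℚ) (x : J → ℤ) (j : J) :
    chiDist B l'k (x + Pi.single j 1)
      = chiDist B l'k x + (1 - ∑ i, ((x i : ℚ) + l'k i) * B i j) := by
  refine chi_step' B hsym l'k x _ j fun i => ?_
  by_cases h : i = j <;> simp [h, Pi.single_apply]


section
variable {J : Type*} [Fintype J] [DecidableEq J]

noncomputable def fR (B : J → J → ℚ) (x : J → ℝ) : ℝ :=
  ∑ i, ∑ j, x i * (B i j : ℝ) * x j

lemma fR_cont (B : J → J → ℚ) : Continuous (fR B) := by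
  refine continuous_finset_sum _ fun i _ => continuous_finset_sum _ fun j _ => ?_
  exact ((continuous_apply i).mul continuous_const).mul (continuous_apply j)

lemma fR_cast (B : J → J → ℚ) (q : J → ℚ) :
    fR B (fun i => (q i : ℝ)) = ((∑ i, ∑ j, q i * B i j * q j : ℚ) : ℝ) := by
  push_cast [fR]; ring

lemma fR_nonpos (B : J → J → ℚ)
    (hneg : ∀ x : J → ℚ, x ≠ 0 → ∑ i, ∑ j, x i * B i j * x j < 0) :
    ∀ x : J → ℝ, fR B x ≤ 0 := by
  have hclosed : IsClosed {x : J → ℝ | fR B x ≤ 0} :=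
    isClosed_le (fR_cont B) continuous_const
  have hdense : Dense (Set.pi Set.univ fun _ : J => Set.range ((↑) : ℚ → ℝ)) :=
    dense_pi Set.univ fun _ _ => Rat.denseRange_cast
  have hsub : (Set.pi Set.univ fun _ : J => Set.range ((↑) : ℚ → ℝ))
      ⊆ {x : J → ℝ | fR B x ≤ 0} := by
    intro x hx
    choose q hq using fun i => hx i (Set.mem_univ i)
    have hxq : x = fun i => (q i : ℝ) := by ext i; exact (hq i).symm
    rw [Set.mem_setOf_eq, hxq, fR_cast]
    by_cases h0 : q = 0
    · simp [h0]
    · exact_mod_cast (hneg q h0).le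
  have : Dense {x : J → ℝ | fR B x ≤ 0} := hdense.mono hsub
  intro x
  have : {x : J → ℝ | fR B x ≤ 0} = Set.univ := by
    rw [← hclosed.closure_eq, this.closure_eq]
  exact (this ▸ Set.mem_univ x : x ∈ {x : J → ℝ | fR B x ≤ 0})

lemma fR_neg (B : J → J → ℚ) (hsym : ∀ i j, B i j = B j i)
    (hneg : ∀ x : J → ℚ, x ≠ 0 → ∑ i, ∑ j, x i * B i j * x j < 0) :
    ∀ x : J → ℝ, x ≠ 0 → fR B x < 0 := by
  intro x hx
  rcases lt_or_eq_of_le (fR_nonpos B hneg x) with h | h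
  · exact h
  exfalso
  set Aq : Matrix J J ℚ := Matrix.of (fun i j => -B i j) with hAq
  set A : Matrix J J ℝ := Aq.map ((↑) : ℚ → ℝ) with hA
  have hdot : ∀ y : J → ℝ, y ⬝ᵥ (A *ᵥ y) = - fR B y := by
    intro y
    simp only [dotProduct, Matrix.mulVec, fR, hA, hAq, Matrix.map_apply, Matrix.of_apply,
      dotProduct, Finset.mul_sum, ← Finset.sum_neg_distrib]
    refine Finset.sum_congr rfl fun i _ => Finset.sum_congr rfl fun j _ => by push_cast; ring
  have hpsd : A.PosSemidef := by
    rw [Matrix.posSemidef_iff_dotProduct_mulVec]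
    constructor
    · ext i j
      simp [hA, hAq, Matrix.conjTranspose_apply, hsym i j]
    · intro y
      rw [star_trivial, hdot]
      simpa using fR_nonpos B hneg y
  have hker : A *ᵥ x = 0 := by
    rw [← (hpsd.dotProduct_mulVec_zero_iff x), star_trivial, hdot, h, neg_zero]
  have hdet : A.det = 0 := Matrix.exists_mulVec_eq_zero_iff.mp ⟨x, hx, hker⟩
  have hdetq : Aq.det = 0 := by
    have h2 := RingHom.map_det (Rat.castHom ℝ) Aq
    rw [RingHom.mapMatrix_apply, Rat.coe_castHom] at h2
    have h3 : ((Aq.det : ℚ) : ℝ) = 0 := by rw [h2, ← hA]; exact hdet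
    exact_mod_cast h3
  obtain ⟨v, hv, hvker⟩ := Matrix.exists_mulVec_eq_zero_iff.mpr hdetq
  have : (∑ i, ∑ j, v i * B i j * v j) = - (v ⬝ᵥ (Aq *ᵥ v)) := by
    simp only [dotProduct, Matrix.mulVec, hAq, Matrix.of_apply, dotProduct,
      Finset.mul_sum, ← Finset.sum_neg_distrib]
    exact Finset.sum_congr rfl fun i _ => Finset.sum_congr rfl fun j _ => by ring
  have h0 : (∑ i, ∑ j, v i * B i j * v j) = 0 := by rw [this, hvker]; simp
  exact absurd h0 (hneg v hv).ne

end

lemma fR_bound {J : Type*} [Fintype J] [DecidableEq J] [Nonempty J] (B : J → J → ℚ)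
    (hsym : ∀ i j, B i j = B j i)
    (hneg : ∀ x : J → ℚ, x ≠ 0 → ∑ i, ∑ j, x i * B i j * x j < 0) :
    ∃ ε : ℝ, 0 < ε ∧ ∀ x : J → ℝ, fR B x ≤ -ε * ∑ j, x j ^ 2 := by
  set K : Set (J → ℝ) := {x | ∑ j, x j ^ 2 = 1} with hK
  have hKclosed : IsClosed K := by
    have : Continuous fun x : J → ℝ => ∑ j, x j ^ 2 :=
      continuous_finset_sum _ fun j _ => (continuous_apply j).pow 2
    exact isClosed_eq this continuous_const
  have hKbdd : Bornology.IsBounded K := by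
    refine (Metric.isBounded_closedBall (x := (0 : J → ℝ)) (r := 1)).subset ?_
    intro x hx
    rw [Metric.mem_closedBall, dist_zero_right]
    refine (pi_norm_le_iff_of_nonneg zero_le_one).mpr fun i => ?_
    rw [Real.norm_eq_abs, ← sq_le_one_iff_abs_le_one]
    calc x i ^ 2 ≤ ∑ j, x j ^ 2 :=
          Finset.single_le_sum (fun j _ => sq_nonneg (x j)) (Finset.mem_univ i)
      _ = 1 := hx
  have hKcompact : IsCompact K := Metric.isCompact_of_isClosed_isBounded hKclosed hKbdd
  have hKne : K.Nonempty := by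
    obtain ⟨j0⟩ := (inferInstance : Nonempty J)
    refine ⟨Pi.single j0 1, ?_⟩
    simp [hK, Pi.single_apply, sq]
  obtain ⟨xm, hxmK, hmax⟩ := hKcompact.exists_isMaxOn hKne (fR_cont B).continuousOn
  have hxm0 : xm ≠ 0 := by
    intro h0
    rw [h0] at hxmK
    simp [hK, Set.mem_setOf_eq] at hxmK
  refine ⟨-fR B xm, by simpa using fR_neg B hsym hneg xm hxm0, fun x => ?_⟩
  rw [neg_neg]
  by_cases h0 : ∑ j, x j ^ 2 = 0
  · have hx0 : x = 0 := by
      funext i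
      have := (Finset.sum_eq_zero_iff_of_nonneg (fun j _ => sq_nonneg (x j))).mp h0 i
        (Finset.mem_univ i)
      exact pow_eq_zero_iff (n := 2) (by norm_num) |>.mp this
    simp [hx0, fR]
  · have hs : 0 < ∑ j, x j ^ 2 :=
      lt_of_le_of_ne (Finset.sum_nonneg fun j _ => sq_nonneg (x j)) (Ne.symm h0)
    set t : ℝ := Real.sqrt (∑ j, x j ^ 2) with ht
    have ht0 : 0 < t := Real.sqrt_pos.mpr hs
    have ht2 : t ^ 2 = ∑ j, x j ^ 2 := Real.sq_sqrt hs.le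
    have hyK : (fun j => x j / t) ∈ K := by
      rw [hK, Set.mem_setOf_eq]
      have : ∀ j, (x j / t) ^ 2 = x j ^ 2 / t ^ 2 := fun j => div_pow _ _ _
      rw [Finset.sum_congr rfl fun j _ => this j, ← Finset.sum_div, ← ht2, div_self]
      positivity
    have hyval : fR B x = (fR B (fun j => x j / t)) * t ^ 2 := by
      simp only [fR, Finset.sum_mul]
      refine Finset.sum_congr rfl fun i _ => ?_
      refine Finset.sum_congr rfl fun j _ => ?_
      have ht' : (t:ℝ) ≠ 0 := ht0.ne'
      field_simp [ht']
    have hle : fR B (fun j => x j / t) ≤ fR B xm := hmax hyK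
    calc fR B x = (fR B (fun j => x j / t)) * t ^ 2 := hyval
      _ ≤ fR B xm * t ^ 2 := mul_le_mul_of_nonneg_right hle (sq_nonneg t)
      _ = fR B xm * ∑ j, x j ^ 2 := by rw [ht2]


lemma pairing_int {J : Type*} [Fintype J] (B : J → J → ℚ)
    (hBint : ∀ i j, ∃ m : ℤ, B i j = m) (l'k : J → ℚ)
    (hlkint : ∀ j, ∃ m : ℤ, ∑ i, l'k i * B i j = m)
    (x : J → ℤ) (j : J) :
    ∃ n : ℤ, ∑ i, ((x i : ℚ) + l'k i) * B i j = n := by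
  choose M hM using hBint
  choose m hm using hlkint
  refine ⟨(∑ i, x i * M i j) + m j, ?_⟩
  have hsplit : ∑ i, ((x i : ℚ) + l'k i) * B i j
      = (∑ i, (x i : ℚ) * B i j) + ∑ i, l'k i * B i j := by
    simp only [add_mul, Finset.sum_add_distrib]
  rw [hsplit, hm j]
  push_cast
  congr 1
  exact Finset.sum_congr rfl fun i _ => by rw [hM i j]

lemma pairing_ge_one {J : Type*} [Fintype J] (B : J → J → ℚ)
    (hBint : ∀ i j, ∃ m : ℤ, B i j = m) (l'k : J → ℚ)
    (hlkint : ∀ j, ∃ m : ℤ, ∑ i, l'k i * B i j = m)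
    (x : J → ℤ) (j : J) (h : 0 < ∑ i, ((x i : ℚ) + l'k i) * B i j) :
    1 ≤ ∑ i, ((x i : ℚ) + l'k i) * B i j := by
  obtain ⟨n, hn⟩ := pairing_int B hBint l'k hlkint x j
  rw [hn] at h ⊢
  have : 0 < n := by exact_mod_cast h
  exact_mod_cast this


/-- generalized Laufer algorithm: starting from `x₀`, repeatedly add a
base element `b_j` with `(x_l + l'_{[k]}, b_j) > 0` as long as `x_l ∉ S_{[k]}`.  Then the
algorithm terminates, its endpoint is the unique minimal `y ≥ x₀` in `S_{[k]}`, and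
`χ_k(x_{l+1}) ≤ χ_k(x_l)` at every step (with `k = K + 2 l'_{[k]}`). -/
theorem laufer_algorithm {J : Type*} [Fintype J] [DecidableEq J]
    (B : J → J → ℚ)
    (hsym : ∀ i j, B i j = B j i)
    (hoff : ∀ i j, i ≠ j → B i j = 0 ∨ B i j = 1)
    (hBint : ∀ i j, ∃ m : ℤ, B i j = m)
    (hconn : (SimpleGraph.fromRel fun i j => B i j = 1).Connected)
    (hneg : ∀ x : J → ℚ, x ≠ 0 → ∑ i, ∑ j, x i * B i j * x j < 0)
    (l'k : J → ℚ)
    (hlkint : ∀ j, ∃ m : ℤ, ∑ i, l'k i * B i j = m)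
    (hS : ∀ j, ∑ i, l'k i * B i j ≤ 0)
    (hmin : ∀ z : J → ℤ, (∀ j, ∑ i, (l'k i + z i) * B i j ≤ 0) → ∀ i, (0 : ℤ) ≤ z i)
    (x₀ : J → ℤ) (c : ℕ → J → ℤ) (hc0 : c 0 = x₀)
    (hstep : ∀ l, ¬ (∀ j, ∑ i, ((c l i : ℚ) + l'k i) * B i j ≤ 0) →
      ∃ j, 0 < ∑ i, ((c l i : ℚ) + l'k i) * B i j ∧ c (l + 1) = c l + Pi.single j 1)
    (hstop : ∀ l, (∀ j, ∑ i, ((c l i : ℚ) + l'k i) * B i j ≤ 0) → c (l + 1) = c l) :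
    (∃ t, ∀ j, ∑ i, ((c t i : ℚ) + l'k i) * B i j ≤ 0) ∧
    (∀ t, (∀ j, ∑ i, ((c t i : ℚ) + l'k i) * B i j ≤ 0) →
      ((∀ j, x₀ j ≤ c t j) ∧
        ∀ z : J → ℤ, (∀ j, x₀ j ≤ z j) → (∀ j, ∑ i, ((z i : ℚ) + l'k i) * B i j ≤ 0) →
          ∀ j, c t j ≤ z j)) ∧
    (∀ l, chiDist B l'k (c (l + 1)) ≤ chiDist B l'k (c l)) := by
  haveI : Nonempty J := hconn.nonempty
  -- Part 3 : χ decreases along the algorithm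
  have part3 : ∀ l, chiDist B l'k (c (l + 1)) ≤ chiDist B l'k (c l) := by
    intro l
    by_cases h : ∀ j, ∑ i, ((c l i : ℚ) + l'k i) * B i j ≤ 0
    · rw [hstop l h]
    · obtain ⟨j, hj, hs'⟩ := hstep l h
      rw [hs', chi_step B hsym l'k (c l) j]
      have h1 := pairing_ge_one B hBint l'k hlkint (c l) j hj
      linarith
  -- the sequence is monotone
  have hmono : ∀ l i, c l i ≤ c (l + 1) i := by
    intro l i
    by_cases h : ∀ j, ∑ i, ((c l i : ℚ) + l'k i) * B i j ≤ 0
    · rw [hstop l h]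
    · obtain ⟨j, _, hs'⟩ := hstep l h
      rw [hs']
      simp only [Pi.add_apply, Pi.single_apply]
      split <;> omega
  have hge0 : ∀ l i, x₀ i ≤ c l i := by
    intro l
    induction l with
    | zero => intro i; rw [hc0]
    | succ n ih => intro i; exact (ih i).trans (hmono n i)
  -- minimality: any z ≥ x₀ in S dominates every c l
  have hdom : ∀ (z : J → ℤ), (∀ j, x₀ j ≤ z j) →
      (∀ j, ∑ i, ((z i : ℚ) + l'k i) * B i j ≤ 0) → ∀ l i, c l i ≤ z i := by
    intro z hz hzS l
    induction l with
    | zero => intro i; rw [hc0]; exact hz i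
    | succ n ih =>
      by_cases h : ∀ j, ∑ i, ((c n i : ℚ) + l'k i) * B i j ≤ 0
      · rw [hstop n h]; exact ih
      · obtain ⟨j, hj, hs'⟩ := hstep n h
        have hlt : c n j < z j := by
          by_contra hcon
          have hej : c n j = z j := le_antisymm (ih j) (not_lt.mp hcon)
          have hle : ∑ i, ((c n i : ℚ) + l'k i) * B i j
              ≤ ∑ i, ((z i : ℚ) + l'k i) * B i j := by
            refine Finset.sum_le_sum fun i _ => ?_
            by_cases hij : i = j
            · subst hij; rw [hej]
            · have hB : 0 ≤ B i j := by rcases hoff i j hij with h' | h' <;> rw [h'] <;> norm_num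
              have : (c n i : ℚ) ≤ (z i : ℚ) := by exact_mod_cast ih i
              nlinarith
          exact absurd (lt_of_lt_of_le hj (hle.trans (hzS j))) (lt_irrefl 0)
        intro i
        rw [hs']
        simp only [Pi.add_apply, Pi.single_apply]
        split
        · next hij => subst hij; omega
        · simpa using ih i
  -- boundedness and termination
  have part1 : ∃ t, ∀ j, ∑ i, ((c t i : ℚ) + l'k i) * B i j ≤ 0 := by
    by_contra hno
    push_neg at hno
    -- every step increases the coordinate sum by 1
    have hsum : ∀ l, (∑ j, c (l + 1) j) = (∑ j, c l j) + 1 := by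
      intro l
      obtain ⟨j, _, hs'⟩ := hstep l (by
        intro hall
        obtain ⟨j, hj⟩ := hno l
        exact absurd (hall j) (not_le.mpr hj))
      rw [hs']
      simp only [Pi.add_apply, Finset.sum_add_distrib, Pi.single_apply]
      simp
    have hsum' : ∀ l, (∑ j, c l j) = (∑ j, c 0 j) + l := by
      intro l
      induction l with
      | zero => simp
      | succ n ih => rw [hsum n, ih]; push_cast; ring
    -- χ is bounded by its initial value
    have hchi : ∀ l, chiDist B l'k (c l) ≤ chiDist B l'k (c 0) := by
      intro l
      induction l with
      | zero => exact le_refl _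
      | succ n ih => exact (part3 n).trans ih
    obtain ⟨ε, hε, hbound⟩ := fR_bound B hsym hneg
    set kv : J → ℚ := fun j => (-(B j j) - 2) + 2 * ∑ i, l'k i * B i j with hkv
    set Kb : ℝ := (∑ j, |((kv j : ℚ) : ℝ)|) + 1 with hKb
    have hKb0 : 0 ≤ Kb := by positivity
    set C : ℝ := 2 * |((chiDist B l'k (c 0) : ℚ) : ℝ)| + 1 with hC
    have hC0 : 0 ≤ C := by positivity
    set n : ℝ := (Fintype.card J : ℝ) with hn
    have hn0 : 0 < n := by
      rw [hn]; exact_mod_cast Fintype.card_pos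
    set Tmax : ℝ := max 1 (n * (Kb + C) / ε) with hTmax
    -- key bound on each c l
    have hbd : ∀ l, ((∑ j, c l j : ℤ) : ℝ) ≤ Tmax := by
      intro l
      set u : J → ℝ := fun j => ((c l j : ℤ) : ℝ) with hu
      set T : ℝ := ∑ j, |u j| with hT
      have hT0 : 0 ≤ T := Finset.sum_nonneg fun j _ => abs_nonneg _
      -- fR of u equals the rational quadratic form
      have hfu : fR B u = ((∑ i, ∑ j, ((c l i : ℚ)) * B i j * ((c l j : ℚ)) : ℚ) : ℝ) := by
        have : u = fun j => (((c l j : ℚ)) : ℝ) := by funext j; push_cast [hu]; ring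
        rw [this, fR_cast]
      -- quadratic form value from χ
      have hquad : (∑ i, ∑ j, ((c l i : ℚ)) * B i j * ((c l j : ℚ)) : ℚ)
          = -(∑ j, (c l j : ℚ) * kv j) - 2 * chiDist B l'k (c l) := by
        simp only [chiDist, hkv]; ring
      -- so ε ∑ u² ≤ linear + const
      have h1 : ε * ∑ j, u j ^ 2 ≤ Kb * T + C := by
        have h2 := hbound u
        rw [hfu, hquad] at h2
        push_cast at h2
        have h3 : ((chiDist B l'k (c l) : ℚ) : ℝ) ≤ |((chiDist B l'k (c 0) : ℚ) : ℝ)| := by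
          have := hchi l
          have h4 : ((chiDist B l'k (c l) : ℚ) : ℝ) ≤ ((chiDist B l'k (c 0) : ℚ) : ℝ) := by
            exact_mod_cast this
          exact h4.trans (le_abs_self _)
        have h5 : (∑ j, ((c l j : ℤ) : ℝ) * ((kv j : ℚ) : ℝ)) ≤ Kb * T := by
          rw [hT, Finset.mul_sum]
          refine Finset.sum_le_sum fun j _ => ?_
          have h6 : ((c l j : ℤ) : ℝ) * ((kv j : ℚ) : ℝ) ≤ |u j| * |((kv j : ℚ) : ℝ)| := by
            have huj : u j = ((c l j : ℤ) : ℝ) := rfl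
            rw [← huj, ← abs_mul]
            exact le_abs_self _
          have h7 : |((kv j : ℚ) : ℝ)| ≤ Kb := by
            rw [hKb]
            have := Finset.single_le_sum (f := fun j => |((kv j : ℚ) : ℝ)|)
              (fun j _ => abs_nonneg _) (Finset.mem_univ j)
            linarith
          calc ((c l j : ℤ) : ℝ) * ((kv j : ℚ) : ℝ) ≤ |u j| * |((kv j : ℚ) : ℝ)| := h6
            _ ≤ |u j| * Kb := mul_le_mul_of_nonneg_left h7 (abs_nonneg _)
            _ = Kb * |u j| := mul_comm _ _
        -- assemble
        linarith [h2, h5, h3]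
      -- Chebyshev style bound : T² ≤ n ∑ u²
      have hcheb : T ^ 2 ≤ n * ∑ j, u j ^ 2 := by
        have := sq_sum_le_card_mul_sum_sq (s := Finset.univ) (f := fun j => |u j|)
        simpa [hT, sq_abs, hn] using this
      have hTle : T ≤ Tmax := by
        by_cases hT1 : T ≤ 1
        · exact hT1.trans (le_max_left _ _)
        · push_neg at hT1
          have h8 : ε * T ^ 2 ≤ n * (Kb * T + C) := by
            have := mul_le_mul_of_nonneg_left h1 hn0.le
            nlinarith [hcheb, hε]
          have h9 : ε * T ≤ n * (Kb + C) := by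
            have hCT : n * C * 1 ≤ n * C * T :=
              mul_le_mul_of_nonneg_left hT1.le (mul_nonneg hn0.le hC0)
            have h8' : (ε * T) * T ≤ (n * (Kb + C)) * T := by nlinarith [h8, hCT]
            exact le_of_mul_le_mul_right h8' (lt_trans zero_lt_one hT1)
          have : T ≤ n * (Kb + C) / ε := by
            rw [le_div_iff₀ hε]; linarith
          exact this.trans (le_max_right _ _)
      calc ((∑ j, c l j : ℤ) : ℝ) = ∑ j, u j := by push_cast [hu]; ring
        _ ≤ T := Finset.sum_le_sum fun j _ => le_abs_self _
        _ ≤ Tmax := hTle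
    -- contradiction with unbounded growth
    set SB : ℤ := ⌈Tmax⌉ with hSB
    have hsl : ∀ l : ℕ, (∑ j, c l j) ≤ SB := by
      intro l
      have := (hbd l).trans (Int.le_ceil Tmax)
      exact_mod_cast this
    set N : ℕ := (SB - ∑ j, c 0 j).toNat + 1 with hN
    have := hsl N
    rw [hsum' N] at this
    have h10 : SB - (∑ j, c 0 j) ≤ ((SB - ∑ j, c 0 j).toNat : ℤ) := Int.self_le_toNat _
    omega
  refine ⟨part1, ?_, part3⟩
  intro t ht
  exact ⟨fun j => hge0 t j, fun z hz hzS j => hdom z hz hzS t j⟩
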